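/- Let T be a noncrossing tree on [n] with n ≥ 2. Then s_n(T) = 1, where s(T) is the signature of T. More generally, s_i(T) = 1 if and only if the vertices on the unique path in T from 1 to i appear in increasing order. -/

import Mathlib

attribute [local instance] Classical.propDecidable

/-- A graph on `Fin n` is noncrossing if it has no pair of edges `{a,c}` and `{b,d}`
with `a < b < c < d`. -/
def Noncrossing {n : ℕ} (G : SimpleGraph (Fin n)) : Prop :=
  ∀ a b c d : Fin n, a < b → b < c → c < d → G.Adj a c → G.Adj b d → False

/-- The signature of a noncrossing tree on `Fin n` (vertices `0, 1, ..., n-1`):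
`s 0 = 1`; and for `i > 0`, `s i = s j` where `j < i` is minimal with `{j,i}` an edge,
if such a `j` exists, and otherwise `s i = s (i-1) + 1`. -/
noncomputable def signature {n : ℕ} (T : SimpleGraph (Fin n)) : ℕ → ℕ
  | 0 => 1
  | (i+1) =>
    if h : ∃ j, j ≤ i ∧ ∃ (h1 : j < n) (h2 : i + 1 < n), T.Adj ⟨j, h1⟩ ⟨i + 1, h2⟩ then
      signature T (@Nat.find _ (fun _ => @instDecidableAnd _ _ (Classical.propDecidable _)
        (@exists_prop_decidable _ _ (Classical.propDecidable _) fun _ =>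
          @exists_prop_decidable _ _ (Classical.propDecidable _) fun _ => Classical.propDecidable _)) h)
    else
      signature T i + 1
termination_by i => i
decreasing_by
  · exact Nat.lt_succ_of_le (by convert (Nat.find_spec h).1)
  · exact Nat.lt_succ_self i

open SimpleGraph List

namespace NCAux

variable {n : ℕ} {T : SimpleGraph (Fin n)}

lemma ivt {a b : Fin n} (M : ℕ) (p : T.Walk a b) :
    a.val ≤ M → M < b.val →
    ∃ c d : Fin n, T.Adj c d ∧ c.val ≤ M ∧ M < d.val ∧ c ∈ p.support ∧ d ∈ p.support := by
  induction p with
  | nil => intro ha hb; omega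
  | @cons u v w h q ih =>
    intro ha hb
    by_cases hv : v.val ≤ M
    · obtain ⟨c, d, h1, h2, h3, h4, h5⟩ := ih hv hb
      exact ⟨c, d, h1, h2, h3, by simp [Walk.support_cons, h4],
        by simp [Walk.support_cons, h5]⟩
    · exact ⟨u, v, h, ha, by omega, Walk.start_mem_support _,
        by simp [Walk.support_cons, Walk.start_mem_support]⟩

lemma chainSupport_le {a b : Fin n} (p : T.Walk a b)
    (hch : List.Chain' (· < ·) p.support) : ∀ x ∈ p.support, x ≤ b := by
  induction p with
  | nil => intro x hx; simp only [Walk.support_nil, List.mem_singleton] at hx; simp [hx]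
  | @cons u v w hadj q ih =>
    rw [Walk.support_cons] at hch
    rw [q.support_eq_cons] at hch
    obtain ⟨huv, hch'⟩ := List.isChain_cons_cons.mp hch
    have hch'' : List.Chain' (· < ·) q.support := by rw [q.support_eq_cons]; exact hch'
    intro x hx
    rw [Walk.support_cons, List.mem_cons] at hx
    rcases hx with rfl | hx
    · exact le_of_lt (lt_of_lt_of_le huv (ih hch'' v (Walk.start_mem_support q)))
    · exact ih hch'' x hx

lemma support_getLast? {a b : Fin n} (p : T.Walk a b) : p.support.getLast? = some b := by
  rw [List.getLast?_eq_getLast (l := p.support) (by simp), p.getLast_support]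

lemma prefix_chain {a b : Fin n} (p : T.Walk a b) (hch : List.Chain' (· < ·) p.support)
    (c : Fin n) (hc : c ∈ p.support) : ∃ r : T.Walk a c, List.Chain' (· < ·) r.support := by
  refine ⟨p.takeUntil c hc, ?_⟩
  have hs : p.support = (p.takeUntil c hc).support ++ (p.dropUntil c hc).support.tail := by
    rw [← Walk.support_append, p.take_spec hc]
  exact hch.prefix ⟨_, hs.symm⟩

lemma concat_chain {a b c : Fin n} (p : T.Walk a b) (h : T.Adj b c)
    (hch : List.Chain' (· < ·) p.support) (hbc : b < c) :
    List.Chain' (· < ·) (p.concat h).support := by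
  rw [Walk.support_concat]
  refine List.isChain_append.mpr ⟨hch, List.isChain_singleton _, ?_⟩
  intro x hx y hy
  rw [support_getLast?, Option.mem_some_iff] at hx
  simp only [List.head?_cons, Option.mem_some_iff] at hy
  subst hx; subst hy; exact hbc

lemma last_edge {a b : Fin n} (p : T.Walk a b) (hab : a ≠ b)
    (hch : List.Chain' (· < ·) p.support) :
    ∃ (k : Fin n) (r : T.Walk a k), T.Adj k b ∧ k < b ∧ List.Chain' (· < ·) r.support ∧
      ∀ x ∈ r.support, x ∈ p.support := by
  obtain ⟨k, hadj, r, hq⟩ := Walk.exists_eq_cons_of_ne (Ne.symm hab) p.reverse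
  have hsup : p.support = r.reverse.support ++ [b] := by
    have h1 : p.support.reverse = b :: r.support := by
      rw [← Walk.support_reverse, hq, Walk.support_cons]
    calc p.support = p.support.reverse.reverse := (List.reverse_reverse _).symm
      _ = (b :: r.support).reverse := by rw [h1]
      _ = r.support.reverse ++ [b] := by simp
      _ = r.reverse.support ++ [b] := by rw [Walk.support_reverse]
  rw [hsup] at hch
  obtain ⟨hc1, _, hjunc⟩ := List.isChain_append.mp hch
  have hkb : k < b := by
    refine hjunc k ?_ b ?_
    · rw [support_getLast? r.reverse]; rfl
    · rfl
  exact ⟨k, r.reverse, hadj.symm, hkb, hc1,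
    fun x hx => by rw [hsup]; exact List.mem_append_left _ hx⟩

lemma sig_pos (T : SimpleGraph (Fin n)) : ∀ i, 1 ≤ signature T i := by
  intro i
  induction i using Nat.strong_induction_on with
  | _ i IH =>
    match i with
    | 0 => rw [signature]
    | (j+1) =>
      rw [signature]
      split
      · next h => exact IH _ (Nat.lt_succ_of_le (by convert (Nat.find_spec h).1))
      · have := IH j (Nat.lt_succ_self j); omega

lemma key (h0 : 0 < n) (hnc : Noncrossing T) :
    ∀ i (hi : i < n), (signature T i = 1 ↔
      ∃ p : T.Walk ⟨0, h0⟩ ⟨i, hi⟩, List.Chain' (· < ·) p.support) := by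
  intro i
  induction i using Nat.strong_induction_on with
  | _ i IH =>
    match i with
    | 0 =>
      intro hi
      rw [signature]
      simp only [true_iff]
      exact ⟨Walk.nil, List.isChain_singleton _⟩
    | (i+1) =>
      intro hi
      rw [signature]
      by_cases h : ∃ j, j ≤ i ∧ ∃ (h1 : j < n) (h2 : i + 1 < n), T.Adj ⟨j, h1⟩ ⟨i + 1, h2⟩
      · rw [dif_pos h]
        obtain ⟨hj0le, h1, h2, hadj⟩ := Nat.find_spec h
        rw [show ∀ inst, @Nat.find _ inst h = Nat.find h from fun _ => by congr]
        rw [IH (Nat.find h) (Nat.lt_succ_of_le hj0le) h1]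
        constructor
        · rintro ⟨p, hp⟩
          have hadj' : T.Adj ⟨Nat.find h, h1⟩ ⟨i + 1, hi⟩ := hadj
          refine ⟨p.concat hadj', concat_chain p hadj' hp ?_⟩
          exact Fin.mk_lt_mk.mpr (Nat.lt_succ_of_le hj0le)
        · rintro ⟨q, hq⟩
          have hne : (⟨0, h0⟩ : Fin n) ≠ ⟨i + 1, hi⟩ := by
            simp [Fin.ext_iff]
          obtain ⟨k, r, hkadj, hkb, hrch, hrmem⟩ := last_edge q hne hq
          by_cases hmem : (⟨Nat.find h, h1⟩ : Fin n) ∈ r.support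
          · exact prefix_chain r hrch _ hmem
          · exfalso
            have hk0 : Nat.find h ≠ 0 := by
              intro hz
              apply hmem
              have : (⟨Nat.find h, h1⟩ : Fin n) = ⟨0, h0⟩ := by simp [Fin.ext_iff, hz]
              rw [this]; exact Walk.start_mem_support r
            have hkle : k.val ≤ i := by
              have := Fin.mk_lt_mk.mp hkb; omega
            have hfind_le : Nat.find h ≤ k.val :=
              Nat.find_min' h ⟨hkle, k.isLt, hi, by
                convert hkadj using 2 <;> simp [Fin.ext_iff]⟩
            have hfind_lt : Nat.find h < k.val := by
              rcases Nat.lt_or_ge (Nat.find h) k.val with h' | h'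
              · exact h'
              · exfalso
                apply hmem
                have : (⟨Nat.find h, h1⟩ : Fin n) = k := by
                  simp [Fin.ext_iff]; omega
                rw [this]; exact Walk.end_mem_support r
            obtain ⟨c, d, hcd, hcle, hdgt, hcmem, hdmem⟩ :=
              ivt (Nat.find h) r (by simp) (by simpa using hfind_lt)
            have hclt : c.val < Nat.find h := by
              rcases Nat.lt_or_ge c.val (Nat.find h) with h' | h'
              · exact h'
              · exfalso
                apply hmem
                have : (⟨Nat.find h, h1⟩ : Fin n) = c := by simp [Fin.ext_iff]; omega
                rw [this]; exact hcmem
            have hdle : d.val ≤ k.val := chainSupport_le r hrch d hdmem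
            refine hnc c ⟨Nat.find h, h1⟩ d ⟨i + 1, hi⟩ ?_ ?_ ?_ hcd hadj
            · exact Fin.mk_lt_mk.mpr hclt |>.trans_le (le_refl _)
            · exact hdgt
            · exact Fin.mk_lt_mk.mpr (by omega)
      · rw [dif_neg h]
        constructor
        · intro habs
          have := sig_pos T i; omega
        · rintro ⟨q, hq⟩
          exfalso
          have hne : (⟨0, h0⟩ : Fin n) ≠ ⟨i + 1, hi⟩ := by simp [Fin.ext_iff]
          obtain ⟨k, r, hkadj, hkb, _, _⟩ := last_edge q hne hq
          refine h ⟨k.val, ?_, k.isLt, hi, ?_⟩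
          · have := Fin.mk_lt_mk.mp hkb; omega
          · convert hkadj using 2 <;> simp [Fin.ext_iff]

end NCAux

/-- For a noncrossing tree `T` on `[n]` (`n ≥ 2`), the last entry of the signature is `1`;
more generally, `s i = 1` iff the unique path in `T` from the first vertex to `i`
visits its vertices in increasing order. -/
theorem signature_eq_one_iff_path_increasing {n : ℕ} (hn : 2 ≤ n)
    (T : SimpleGraph (Fin n)) (hT : T.IsTree) (hnc : Noncrossing T) :
    signature T (n - 1) = 1 ∧
    ∀ (i : Fin n) (p : T.Walk ⟨0, by omega⟩ i), p.IsPath →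
      (signature T i.val = 1 ↔ List.Chain' (· < ·) p.support) := by
  have h0 : 0 < n := by omega
  have key := NCAux.key (T := T) h0 hnc
  constructor
  · -- part 1
    have hlt : n - 1 < n := by omega
    rw [key (n - 1) hlt]
    -- the set of increasingly-reachable vertices
    set S : Finset (Fin n) :=
      Finset.univ.filter (fun i => ∃ p : T.Walk ⟨0, h0⟩ i, List.Chain' (· < ·) p.support)
      with hS
    have hmemS : ∀ i : Fin n, i ∈ S ↔ ∃ p : T.Walk ⟨0, h0⟩ i, List.Chain' (· < ·) p.support := by
      intro i; simp [hS]
    have h0S : (⟨0, h0⟩ : Fin n) ∈ S := (hmemS _).mpr ⟨SimpleGraph.Walk.nil, List.isChain_singleton _⟩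
    have hSne : S.Nonempty := ⟨_, h0S⟩
    set M : Fin n := S.max' hSne with hM
    have hMS : M ∈ S := S.max'_mem hSne
    obtain ⟨pM, hpM⟩ := (hmemS M).mp hMS
    have hMtop : M.val = n - 1 := by
      by_contra hMne
      have hMlt : M.val < n - 1 := by have := M.isLt; omega
      obtain ⟨w⟩ := hT.isConnected ⟨0, h0⟩ ⟨n - 1, hlt⟩
      obtain ⟨c, d, hcd, hcle, hdgt, _, _⟩ := NCAux.ivt M.val w (by simp) (by simpa using hMlt)
      have hcS : c ∈ S := by
        by_contra hcS
        have hcsup : c ∉ pM.support := by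
          intro hc
          exact hcS ((hmemS c).mpr (NCAux.prefix_chain pM hpM c hc))
        have hc0 : 0 < c.val := by
          rcases Nat.eq_zero_or_pos c.val with h' | h'
          · exfalso; apply hcsup
            have : c = (⟨0, h0⟩ : Fin n) := by simp [Fin.ext_iff, h']
            rw [this]; exact SimpleGraph.Walk.start_mem_support pM
          · exact h'
        have hcM : c.val < M.val := by
          rcases Nat.lt_or_ge c.val M.val with h' | h'
          · exact h'
          · exfalso; apply hcS
            have : c = M := by simp [Fin.ext_iff]; omega
            rw [this]; exact hMS
        obtain ⟨x, y, hxy, hxle, hygt, hxmem, hymem⟩ :=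
          NCAux.ivt c.val pM (by simp) hcM
        have hxlt : x.val < c.val := by
          rcases Nat.lt_or_ge x.val c.val with h' | h'
          · exact h'
          · exfalso; apply hcsup
            have : c = x := by simp [Fin.ext_iff]; omega
            rw [this]; exact hxmem
        have hyle : y.val ≤ M.val := NCAux.chainSupport_le pM hpM y hymem
        exact hnc x c y d (Fin.lt_def.mpr hxlt) (Fin.lt_def.mpr hygt)
          (Fin.lt_def.mpr (by omega)) hxy hcd
      obtain ⟨pc, hpc⟩ := (hmemS c).mp hcS
      have hcdlt : c < d := Fin.lt_def.mpr (by omega)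
      have hdS : d ∈ S := (hmemS d).mpr ⟨pc.concat hcd, NCAux.concat_chain pc hcd hpc hcdlt⟩
      have := S.le_max' d hdS
      rw [← hM] at this
      exact absurd (lt_of_le_of_lt this (Fin.lt_def.mpr hdgt)) (lt_irrefl _)
    have : (⟨n - 1, hlt⟩ : Fin n) = M := by simp [Fin.ext_iff, hMtop]
    rw [this]
    exact ⟨pM, hpM⟩
  · -- part 2
    intro i p hp
    rw [key i.val i.isLt]
    constructor
    · rintro ⟨q, hq⟩
      have hnodup : q.support.Nodup :=
        ((List.isChain_iff_pairwise.mp hq).imp (fun h => ne_of_lt h))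
      have hqpath : q.IsPath := SimpleGraph.Walk.IsPath.mk' hnodup
      have hpq : p = q := (hT.existsUnique_path ⟨0, h0⟩ i).unique hp hqpath
      rw [hpq]; exact hq
    · intro hch
      exact ⟨p, hch⟩
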